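/- Let 0 < a < b and define C(t) = (1+√(r(t)))²/(2(b²+t²)) with r(t) = (b²+t²)/(a²+t²). Then (2b/π) ∫₀^∞ C(t) dt ≤ (1/2)(1 + √(b/a))². -/

import Mathlib

open MeasureTheory

lemma my_integrableOn (c : ℝ) (hc : 0 < c) :
    IntegrableOn (fun x : ℝ => (c^2 + x^2)⁻¹) (Set.Ioi 0) := by
  have hm : 0 < min (c^2) 1 := by positivity
  have hb : Integrable (fun x : ℝ => (min (c^2) 1)⁻¹ * (1 + x^2)⁻¹) :=
    integrable_inv_one_add_sq.const_mul _
  have hcont : Continuous fun x : ℝ => (c^2 + x^2)⁻¹ := by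
    apply Continuous.inv₀ (by continuity)
    intro x; positivity
  refine (hb.mono' hcont.aestronglyMeasurable ?_).integrableOn
  filter_upwards with x
  rw [Real.norm_eq_abs, abs_of_nonneg (by positivity)]
  rw [← mul_inv]
  apply inv_anti₀ (by positivity)
  have h1 : min (c^2) 1 ≤ c^2 := min_le_left _ _
  have h2 : min (c^2) 1 ≤ 1 := min_le_right _ _
  nlinarith [sq_nonneg x]

lemma my_integral (c : ℝ) (hc : 0 < c) :
    ∫ x in Set.Ioi (0:ℝ), (c^2 + x^2)⁻¹ = Real.pi / (2*c) := by
  have hd : ∀ x ∈ Set.Ici (0:ℝ), HasDerivAt (fun x => c⁻¹ * Real.arctan (x / c))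
      ((c^2 + x^2)⁻¹) x := by
    intro x _
    have h1 : HasDerivAt (fun x : ℝ => x / c) (1/c) x := (hasDerivAt_id x).div_const c
    have h2 := (Real.hasDerivAt_arctan (x/c)).comp x h1
    have h3 := h2.const_mul c⁻¹
    refine h3.congr_deriv ?_
    have : (1 + (x/c)^2) ≠ 0 := by positivity
    field_simp
  have ht : Filter.Tendsto (fun x => c⁻¹ * Real.arctan (x / c)) Filter.atTop
      (nhds (c⁻¹ * (Real.pi/2))) := by
    apply Filter.Tendsto.const_mul
    apply tendsto_nhds_of_tendsto_nhdsWithin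
    exact Real.tendsto_arctan_atTop.comp (Filter.tendsto_id.atTop_div_const hc)
  have h := integral_Ioi_of_hasDerivAt_of_tendsto' hd (my_integrableOn c hc) ht
  rw [h]
  simp [Real.arctan_zero]
  ring

lemma my_pointwise (a b t : ℝ) (ha : 0 < a) (hb : 0 < b) :
    (1 + Real.sqrt ((b^2 + t^2) / (a^2 + t^2)))^2 / (2 * (b^2 + t^2)) ≤
    (1 + Real.sqrt (b/a))/2 * (b^2 + t^2)⁻¹ + (1 + Real.sqrt (a/b))/2 * (a^2 + t^2)⁻¹ := by
  have hA : (0:ℝ) < a^2 + t^2 := by positivity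
  have hB : (0:ℝ) < b^2 + t^2 := by positivity
  rw [Real.sqrt_div hB.le, Real.sqrt_div hb.le, Real.sqrt_div ha.le]
  set u := Real.sqrt (a^2 + t^2) with hu_def
  set v := Real.sqrt (b^2 + t^2) with hv_def
  set s := Real.sqrt a with hs_def
  set r := Real.sqrt b with hr_def
  have hu : 0 < u := Real.sqrt_pos.mpr hA
  have hv : 0 < v := Real.sqrt_pos.mpr hB
  have hs : 0 < s := Real.sqrt_pos.mpr ha
  have hr : 0 < r := Real.sqrt_pos.mpr hb
  have hu2 : u^2 = a^2 + t^2 := Real.sq_sqrt hA.le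
  have hv2 : v^2 = b^2 + t^2 := Real.sq_sqrt hB.le
  rw [← hu2, ← hv2]
  have h1 : (1 + v/u)^2 / (2 * v^2) = (u+v)^2 / (2*(u^2*v^2)) := by
    field_simp
  have h2 : (1 + r/s)/2 * (v^2)⁻¹ + (1 + s/r)/2 * (u^2)⁻¹
      = ((s+r)*(r*u^2 + s*v^2)) / (2*(s*r*(u^2*v^2))) := by
    field_simp; ring
  rw [h1, h2, div_le_div_iff₀ (by positivity) (by positivity)]
  nlinarith [mul_nonneg (sq_nonneg (u*v)) (sq_nonneg (r*u - s*v)), mul_pos hu hv,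
    mul_pos hs hr, sq_nonneg (u+v)]

/-- (2b/π) ∫₀^∞ C(t) dt ≤ (1/2)(1 + √(b/a))², where
C(t) = (1+√(r(t)))²/(2(b²+t²)) and r(t) = (b²+t²)/(a²+t²). -/
theorem C_integral_bound (a b : ℝ) (ha : 0 < a) (hab : a < b) :
    (2 * b / Real.pi) *
        ∫ t in Set.Ioi (0 : ℝ),
          (1 + Real.sqrt ((b^2 + t^2) / (a^2 + t^2)))^2 / (2 * (b^2 + t^2)) ≤
      (1 / 2) * (1 + Real.sqrt (b / a))^2 := by
  have hb : 0 < b := ha.trans hab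
  have hπ : 0 < Real.pi := Real.pi_pos
  set c1 := (1 + Real.sqrt (b/a))/2 with hc1
  set c2 := (1 + Real.sqrt (a/b))/2 with hc2
  -- integrability of the bounding function
  have hIb := my_integrableOn b hb
  have hIa := my_integrableOn a ha
  have hG : Integrable (fun t : ℝ => c1 * (b^2 + t^2)⁻¹ + c2 * (a^2 + t^2)⁻¹)
      (volume.restrict (Set.Ioi 0)) := (hIb.const_mul c1).add (hIa.const_mul c2)
  -- bound the integral
  have hmono : (∫ t in Set.Ioi (0 : ℝ),
        (1 + Real.sqrt ((b^2 + t^2) / (a^2 + t^2)))^2 / (2 * (b^2 + t^2))) ≤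
      ∫ t in Set.Ioi (0 : ℝ), (c1 * (b^2 + t^2)⁻¹ + c2 * (a^2 + t^2)⁻¹) := by
    apply integral_mono_of_nonneg
    · filter_upwards with t
      positivity
    · exact hG
    · filter_upwards with t
      have := my_pointwise a b t ha hb
      simpa [hc1, hc2, div_mul_eq_mul_div, mul_comm] using this
  have hGval : (∫ t in Set.Ioi (0 : ℝ), (c1 * (b^2 + t^2)⁻¹ + c2 * (a^2 + t^2)⁻¹))
      = c1 * (Real.pi / (2*b)) + c2 * (Real.pi / (2*a)) := by
    rw [integral_add (hIb.const_mul c1) (hIa.const_mul c2),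
      MeasureTheory.integral_const_mul, MeasureTheory.integral_const_mul, my_integral b hb, my_integral a ha]
  have hstep : (2 * b / Real.pi) *
        (∫ t in Set.Ioi (0 : ℝ),
          (1 + Real.sqrt ((b^2 + t^2) / (a^2 + t^2)))^2 / (2 * (b^2 + t^2))) ≤
      (2 * b / Real.pi) * (c1 * (Real.pi / (2*b)) + c2 * (Real.pi / (2*a))) := by
    rw [← hGval]
    exact mul_le_mul_of_nonneg_left hmono (by positivity)
  refine hstep.trans_eq ?_
  -- final arithmetic
  set w := Real.sqrt (b/a) with hw_def
  have hw : 0 < w := Real.sqrt_pos.mpr (by positivity)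
  have hw2 : w^2 = b/a := Real.sq_sqrt (by positivity)
  have hinv : Real.sqrt (a/b) = w⁻¹ := by
    rw [show a/b = (b/a)⁻¹ by rw [inv_div], Real.sqrt_inv]
  have hba : b = a * w^2 := by
    rw [hw2]; field_simp
  rw [hc1, hc2, hinv, hba]
  field_simp
  ring
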